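/- Let n ≥ 1 be an integer, d a real number, z a nonzero complex number, and w any complex number. Define J_n(w) = Σ_{k=1}^{n} w^k / k, D_n(w; d) = Σ_{k=0}^{n} ((−d)_k / k!) w^k, j̃_p = Σ_{k=p+1}^{n} z^k / k, and d̃_p = Σ_{k=p+1}^{n} ((−d)_k / k!) z^k, where (a)_k is the Pochhammer symbol. Then J_n(w) D_n(w; d) = J_n(z) D_n(z; d) + D_n(z; d) ( Σ_{p=0}^{n-1} j̃_p (z^{−1}w)^p ) (z^{−1}w − 1) + J_n(w) ( Σ_{p=0}^{n-1} d̃_p (z^{−1}w)^p ) (z^{−1}w − 1). -/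

import Mathlib

/-- Pochhammer symbol `(a)_k = a (a+1) ⋯ (a+k-1)`. -/
noncomputable def poch (a : ℝ) (k : ℕ) : ℝ := ∏ i ∈ Finset.range k, (a + i)

/-- `J_n(w) = ∑_{k=1}^n w^k / k`. -/
noncomputable def Jn (n : ℕ) (w : ℂ) : ℂ := ∑ k ∈ Finset.Icc 1 n, w ^ k / (k : ℂ)

/-- `D_n(w; d) = ∑_{k=0}^n ((-d)_k / k!) w^k`. -/
noncomputable def Dn (n : ℕ) (d : ℝ) (w : ℂ) : ℂ :=
  ∑ k ∈ Finset.range (n + 1), ((poch (-d) k / (Nat.factorial k) : ℝ) : ℂ) * w ^ k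

lemma swap_sum (n : ℕ) (F : ℕ → ℕ → ℂ) :
    ∑ k ∈ Finset.range (n + 1), ∑ p ∈ Finset.range k, F k p
      = ∑ p ∈ Finset.range n, ∑ k ∈ Finset.Icc (p + 1) n, F k p := by
  induction n with
  | zero => simp
  | succ n ih =>
      have h1 : ∀ p ∈ Finset.range n,
          ∑ k ∈ Finset.Icc (p + 1) (n + 1), F k p
            = F (n + 1) p + ∑ k ∈ Finset.Icc (p + 1) n, F k p := by
        intro p hp
        rw [← Finset.insert_Icc_right_eq_Icc_add_one (by have := Finset.mem_range.mp hp; omega), Finset.sum_insert (by simp)]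
      rw [Finset.sum_range_succ, ih, Finset.sum_range_succ (fun p =>
        ∑ k ∈ Finset.Icc (p + 1) (n + 1), F k p), Finset.sum_congr rfl h1,
        Finset.sum_add_distrib, Finset.Icc_self, Finset.sum_singleton,
        Finset.sum_range_succ]
      ring

lemma tail_decomp (n : ℕ) (c : ℕ → ℂ) (z x : ℂ) :
    ∑ k ∈ Finset.range (n + 1), c k * (z ^ k * x ^ k)
      - ∑ k ∈ Finset.range (n + 1), c k * z ^ k
      = (∑ p ∈ Finset.range n, (∑ k ∈ Finset.Icc (p + 1) n, c k * z ^ k) * x ^ p)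
          * (x - 1) := by
  rw [Finset.sum_mul]
  have : ∀ p, (∑ k ∈ Finset.Icc (p + 1) n, c k * z ^ k) * x ^ p * (x - 1)
      = ∑ k ∈ Finset.Icc (p + 1) n, c k * z ^ k * x ^ p * (x - 1) := by
    intro p; rw [Finset.sum_mul, Finset.sum_mul]
  simp_rw [this]
  rw [← swap_sum n (fun k p => c k * z ^ k * x ^ p * (x - 1)),
    ← Finset.sum_sub_distrib]
  refine Finset.sum_congr rfl fun k _ => ?_
  have hg : (∑ p ∈ Finset.range k, x ^ p) * (x - 1) = x ^ k - 1 := geom_sum_mul x k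
  calc c k * (z ^ k * x ^ k) - c k * z ^ k
      = c k * z ^ k * ((∑ p ∈ Finset.range k, x ^ p) * (x - 1)) := by rw [hg]; ring
    _ = ∑ p ∈ Finset.range k, c k * z ^ k * x ^ p * (x - 1) := by
        rw [← mul_assoc, Finset.mul_sum, Finset.sum_mul]

lemma Jn_eq_range (n : ℕ) (w : ℂ) :
    Jn n w = ∑ k ∈ Finset.range (n + 1), ((k : ℂ))⁻¹ * w ^ k := by
  rw [Jn, Finset.sum_range_succ']
  simp only [Nat.cast_zero, inv_zero, zero_mul, add_zero]
  rw [← Finset.Ico_add_one_right_eq_Icc, Finset.sum_Ico_eq_sum_range, Nat.add_sub_cancel]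
  refine Finset.sum_congr rfl fun i _ => ?_
  rw [add_comm 1 i, div_eq_inv_mul]

lemma Jn_tail_eq (n p : ℕ) (z : ℂ) :
    ∑ k ∈ Finset.Icc (p + 1) n, ((k : ℂ))⁻¹ * z ^ k
      = ∑ k ∈ Finset.Icc (p + 1) n, z ^ k / (k : ℂ) := by
  refine Finset.sum_congr rfl fun k _ => ?_
  rw [div_eq_inv_mul]

/-- Lemma 5.7(b): exact decomposition of the product `J_n(w) D_n(w; d)`. -/
theorem log_filter_product_decomposition (n : ℕ) (hn : 1 ≤ n) (d : ℝ)
    (z : ℂ) (hz : z ≠ 0) (w : ℂ) :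
    Jn n w * Dn n d w =
      Jn n z * Dn n d z +
        Dn n d z *
          (∑ p ∈ Finset.range n,
              (∑ k ∈ Finset.Icc (p + 1) n, z ^ k / (k : ℂ)) * (z⁻¹ * w) ^ p) *
          (z⁻¹ * w - 1) +
        Jn n w *
          (∑ p ∈ Finset.range n,
              (∑ k ∈ Finset.Icc (p + 1) n,
                  ((poch (-d) k / (Nat.factorial k) : ℝ) : ℂ) * z ^ k) * (z⁻¹ * w) ^ p) *
          (z⁻¹ * w - 1) := by
  set x := z⁻¹ * w with hx
  have hzx : z * x = w := by rw [hx, ← mul_assoc, mul_inv_cancel₀ hz, one_mul]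
  have hw : ∀ k : ℕ, w ^ k = z ^ k * x ^ k := by
    intro k; rw [← hzx, mul_pow]
  have hJ : Jn n w - Jn n z
      = (∑ p ∈ Finset.range n,
          (∑ k ∈ Finset.Icc (p + 1) n, z ^ k / (k : ℂ)) * x ^ p) * (x - 1) := by
    rw [Jn_eq_range, Jn_eq_range]
    have := tail_decomp n (fun k => ((k : ℂ))⁻¹) z x
    simp_rw [← hw] at this
    rw [this]
    refine congrArg (· * (x - 1)) (Finset.sum_congr rfl fun p _ => ?_)
    rw [Jn_tail_eq]
  have hD : Dn n d w - Dn n d z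
      = (∑ p ∈ Finset.range n,
          (∑ k ∈ Finset.Icc (p + 1) n,
            ((poch (-d) k / (Nat.factorial k) : ℝ) : ℂ) * z ^ k) * x ^ p) * (x - 1) := by
    rw [Dn, Dn]
    have := tail_decomp n (fun k => ((poch (-d) k / (Nat.factorial k) : ℝ) : ℂ)) z x
    simp_rw [← hw] at this
    rw [this]
  linear_combination Dn n d z * hJ + Jn n w * hD
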